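/- Farthest-point sampling guarantees a 2-approximation to the optimal k-center covering radius: in a finite metric space, if S_k is any set of k points chosen greedily (each new point maximizing the distance to the already-chosen set), then the covering radius of S_k is at most twice the minimal covering radius achievable by any k-point subset. -/
import Mathlib


open Finset

/-- Distance from a point to a finite set of points (0 if the set is empty). -/
noncomputable def dSet {X : Type*} [MetricSpace X] (x : X) (S : Finset X) : ℝ :=
  sInf ((fun p => dist x p) '' (S : Set X))

/-- Covering radius of a finite set in a finite metric space. -/
noncomputable def covRad {X : Type*} [MetricSpace X] [Fintype X] (S : Finset X) : ℝ :=
  sSup (Set.range fun x : X => dSet x S)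

lemma dSet_le_dist {X : Type*} [MetricSpace X] (x : X) {S : Finset X} {p : X}
    (hp : p ∈ S) : dSet x S ≤ dist x p := by
  apply csInf_le
  · exact ⟨0, by rintro b ⟨q, hq, rfl⟩; exact dist_nonneg⟩
  · exact ⟨p, by simpa using hp, rfl⟩

lemma dSet_exists {X : Type*} [MetricSpace X] (x : X) {S : Finset X}
    (hS : S.Nonempty) : ∃ p ∈ S, dSet x S = dist x p := by
  have hfin : ((fun p => dist x p) '' (S : Set X)).Finite := (S.finite_toSet).image _
  have hne : ((fun p => dist x p) '' (S : Set X)).Nonempty :=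
    (Finset.coe_nonempty.mpr hS).image _
  obtain ⟨p, hp, heq⟩ := hne.csInf_mem hfin
  exact ⟨p, hp, heq.symm⟩

lemma dSet_anti {X : Type*} [MetricSpace X] (x : X) {S S' : Finset X}
    (hS : S.Nonempty) (hsub : S ⊆ S') : dSet x S' ≤ dSet x S := by
  obtain ⟨p, hp, heq⟩ := dSet_exists x hS
  rw [heq]
  exact dSet_le_dist x (hsub hp)

lemma le_covRad {X : Type*} [MetricSpace X] [Fintype X] (x : X) (S : Finset X) :
    dSet x S ≤ covRad S :=
  le_csSup (Set.finite_range _).bddAbove ⟨x, rfl⟩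

lemma covRad_exists {X : Type*} [MetricSpace X] [Fintype X] [Nonempty X] (S : Finset X) :
    ∃ x : X, covRad S = dSet x S := by
  obtain ⟨x, hx⟩ := (Set.range_nonempty _).csSup_mem (Set.finite_range fun x : X => dSet x S)
  exact ⟨x, hx.symm⟩

/-- Farthest-point sampling is a 2-approximation for the k-center problem:
if `s` is chosen greedily (each `s m`, for `1 ≤ m < k`, maximizes the distance to
the already-chosen points `s 0, …, s (m-1)`), then the covering radius of the
first `k` greedy points is at most twice the covering radius of any `k`-point subset. -/
theorem fps_two_approximation {X : Type*} [MetricSpace X] [Fintype X] [Nonempty X] [DecidableEq X]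
    (k : ℕ) (hk : 1 ≤ k) (hcard : k ≤ Fintype.card X) (s : ℕ → X)
    (greedy : ∀ m, 1 ≤ m → m < k → ∀ x : X,
      dSet x ((Finset.range m).image s) ≤ dSet (s m) ((Finset.range m).image s)) :
    ∀ T : Finset X, T.card = k →
      covRad ((Finset.range k).image s) ≤ 2 * covRad T := by
  intro T hT
  have hT0 : T.Nonempty := Finset.card_pos.mp (by omega)
  set Sk := (Finset.range k).image s with hSkdef
  obtain ⟨x₀, hx₀⟩ := covRad_exists Sk
  -- the k+1 points: the greedy points and the farthest point x₀
  set p : Fin (k + 1) → X := fun i => if (i : ℕ) < k then s i else x₀ with hpdef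
  have key : ∀ i j : Fin (k + 1), (i : ℕ) < (j : ℕ) → covRad Sk ≤ dist (p i) (p j) := by
    intro i j hij
    have hik : (i : ℕ) < k := by omega
    have hpi : p i = s i := if_pos hik
    by_cases hjk : (j : ℕ) < k
    · have hpj : p j = s j := if_pos hjk
      set Sj := (Finset.range (j : ℕ)).image s with hSjdef
      have hSjne : Sj.Nonempty :=
        (Finset.nonempty_range_iff.mpr (by omega)).image s
      have hsub : Sj ⊆ Sk :=
        Finset.image_subset_image (Finset.range_subset_range.mpr (le_of_lt hjk))
      have h1 : dSet (s j) Sj ≤ dist (s j) (s i) :=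
        dSet_le_dist _ (Finset.mem_image_of_mem s (Finset.mem_range.mpr hij))
      have h2 : dSet x₀ Sj ≤ dSet (s j) Sj := greedy _ (by omega) hjk x₀
      have h3 : dSet x₀ Sk ≤ dSet x₀ Sj := dSet_anti x₀ hSjne hsub
      rw [hx₀, hpi, hpj, dist_comm]
      linarith
    · have hpj : p j = x₀ := if_neg hjk
      have h1 : dSet x₀ Sk ≤ dist x₀ (s i) :=
        dSet_le_dist _ (Finset.mem_image_of_mem s (Finset.mem_range.mpr hik))
      rw [hx₀, hpi, hpj, dist_comm]
      exact h1
  have key' : ∀ i j : Fin (k + 1), i ≠ j → covRad Sk ≤ dist (p i) (p j) := by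
    intro i j hij
    rcases lt_or_gt_of_ne (fun h => hij (Fin.ext h) : (i : ℕ) ≠ (j : ℕ)) with h | h
    · exact key i j h
    · rw [dist_comm]; exact key j i h
  -- nearest point in T
  have near : ∀ x : X, ∃ t ∈ T, dist x t ≤ covRad T := by
    intro x
    obtain ⟨t, ht, hdt⟩ := dSet_exists x hT0
    exact ⟨t, ht, hdt ▸ le_covRad x T⟩
  choose f hfT hfR using fun i : Fin (k + 1) => near (p i)
  -- pigeonhole
  obtain ⟨i, -, j, -, hij, hfij⟩ :=
    Finset.exists_ne_map_eq_of_card_lt_of_maps_to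
      (s := (Finset.univ : Finset (Fin (k + 1)))) (t := T)
      (by simp [hT]) (fun i _ => hfT i)
  calc covRad Sk ≤ dist (p i) (p j) := key' i j hij
    _ ≤ dist (p i) (f i) + dist (f i) (p j) := dist_triangle _ _ _
    _ = dist (p i) (f i) + dist (p j) (f j) := by rw [hfij, dist_comm (f j) (p j)]
    _ ≤ covRad T + covRad T := add_le_add (hfR i) (hfR j)
    _ = 2 * covRad T := by ring
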